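/- arXiv:1401.6916 — 3 statements merged into one kernel-verified Lean document; each statement's English description precedes it below -/
import Mathlib

section
/- Every linear order admits a dense bicoloration; that is, for every linearly ordered set (L, ≤) there exists a function β : L → Bool such that both β⁻¹(false) and β⁻¹(true) intersect every interval of L containing at least two elements. -/
open Set

/-- `I` is an interval of the linear order `L`. -/
def IsInterval {L : Type*} [LinearOrder L] (I : Set L) : Prop :=
  ∀ x ∈ I, ∀ y ∈ I, ∀ z, x ≤ z → z ≤ y → z ∈ I

namespace DenseBicolor

open Cardinal

variable {L : Type u} [LinearOrder L]

/-- `z` has no immediate neighbour on either side. -/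
def inS (z : L) : Prop :=
  (∀ w, w < z → (Ioo w z).Nonempty) ∧ (∀ w, z < w → (Ioo z w).Nonempty)

/-- the open interval `(x,y)` is nonempty and consists of neighbourless points -/
def good (x y : L) : Prop := (Ioo x y).Nonempty ∧ ∀ z ∈ Ioo x y, inS z

/-- good, and all inner subintervals have the same cardinality -/
def homog (u v : L) : Prop :=
  good u v ∧ ∀ p ∈ Ioo u v, ∀ r ∈ Ioo u v, p < r → #(Ioo p r) = #(Ioo u v)

lemma good_infinite {x y : L} (h : good x y) : (Ioo x y).Infinite := by
  intro hfin
  obtain ⟨m, hm, hmin⟩ := Set.exists_min_image _ id hfin h.1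
  obtain ⟨w, hw⟩ := (h.2 m hm).1 x hm.1
  exact absurd (hmin w ⟨hw.1, hw.2.trans hm.2⟩) (not_le.mpr hw.2)

lemma good_sub {x y p r : L} (h : good x y) (hp : p ∈ Ioo x y) (hr : r ∈ Ioo x y)
    (hpr : p < r) : good p r := by
  constructor
  · exact (h.2 p hp).2 r hpr
  · intro z hz
    exact h.2 z ⟨hp.1.trans hz.1, hz.2.trans hr.2⟩

lemma exists_transversal {X P : Type u} (S : P → Set X) (κ : Cardinal.{u})
    (hκ : ℵ₀ ≤ κ) (hP : #P ≤ κ) (hS : ∀ p, κ ≤ #(S p)) :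
    ∃ f g : P → X, (∀ p, f p ∈ S p) ∧ (∀ p, g p ∈ S p) ∧ ∀ p q, f p ≠ g q := by
  obtain ⟨r, wo, htype⟩ := Cardinal.ord_eq P
  haveI : IsWellOrder P r := wo
  have wf : WellFounded r := wo.wf
  have key : ∀ (p : P) (IH : ∀ q, r q p → X × X),
      ∃ xy : X × X, xy.1 ∈ S p ∧ xy.2 ∈ S p ∧ xy.1 ≠ xy.2 ∧
        ∀ q (hq : r q p), xy.1 ≠ (IH q hq).1 ∧ xy.1 ≠ (IH q hq).2 ∧
          xy.2 ≠ (IH q hq).1 ∧ xy.2 ≠ (IH q hq).2 := by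
    intro p IH
    set U : Set X := (Set.range fun q : {q // r q p} => (IH q.1 q.2).1) ∪
        (Set.range fun q : {q // r q p} => (IH q.1 q.2).2) with hU
    have hseg : #{q // r q p} < κ := by
      have h1 := Ordinal.typein_lt_type r p
      rw [← htype] at h1
      have h2 : ((Ordinal.typein r).toRelEmbedding p : Ordinal) < κ.ord :=
        h1.trans_le (Cardinal.ord_le_ord.mpr hP)
      have h3 := Cardinal.lt_ord.mp h2
      rwa [Ordinal.card_typein] at h3
    have hUcard : #U < κ := by
      refine lt_of_le_of_lt (Cardinal.mk_union_le _ _) ?_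
      exact Cardinal.add_lt_of_lt hκ
        (lt_of_le_of_lt Cardinal.mk_range_le hseg)
        (lt_of_le_of_lt Cardinal.mk_range_le hseg)
    have hbig : κ ≤ #(S p \ U : Set X) := by
      by_contra hlt
      push_neg at hlt
      have hsub : S p ⊆ (S p \ U) ∪ U := by
        intro z hz
        by_cases hzU : z ∈ U
        · exact Or.inr hzU
        · exact Or.inl ⟨hz, hzU⟩
      have : #(S p : Set X) < κ :=
        lt_of_le_of_lt ((Cardinal.mk_le_mk_of_subset hsub).trans (Cardinal.mk_union_le _ _))
          (Cardinal.add_lt_of_lt hκ hlt hUcard)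
      exact absurd (hS p) (not_le.mpr this)
    haveI : Infinite (S p \ U : Set X) := by
      rw [Cardinal.infinite_iff]; exact hκ.trans hbig
    obtain ⟨⟨a, ha⟩, ⟨b, hb⟩, hab⟩ := exists_pair_ne (S p \ U : Set X)
    have hab' : a ≠ b := fun h => hab (Subtype.ext h)
    refine ⟨(a, b), ha.1, hb.1, hab', ?_⟩
    intro q hq
    have m1 : (IH q hq).1 ∈ U := Or.inl ⟨⟨q, hq⟩, rfl⟩
    have m2 : (IH q hq).2 ∈ U := Or.inr ⟨⟨q, hq⟩, rfl⟩
    refine ⟨fun h => ha.2 ?_, fun h => ha.2 ?_, fun h => hb.2 ?_, fun h => hb.2 ?_⟩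
    · simp only at h; rw [h]; exact m1
    · simp only at h; rw [h]; exact m2
    · simp only at h; rw [h]; exact m1
    · simp only at h; rw [h]; exact m2
  let F : P → X × X := wf.fix (fun p IH => (key p IH).choose)
  have hF : ∀ p, F p = (key p (fun q _ => F q)).choose := fun p =>
    wf.fix_eq (fun p IH => (key p IH).choose) p
  have hspec : ∀ p, (F p).1 ∈ S p ∧ (F p).2 ∈ S p ∧ (F p).1 ≠ (F p).2 ∧
      ∀ q (hq : r q p), (F p).1 ≠ (F q).1 ∧ (F p).1 ≠ (F q).2 ∧
        (F p).2 ≠ (F q).1 ∧ (F p).2 ≠ (F q).2 := by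
    intro p
    rw [hF p]
    exact (key p (fun q _ => F q)).choose_spec
  refine ⟨fun p => (F p).1, fun p => (F p).2, fun p => (hspec p).1,
    fun p => (hspec p).2.1, ?_⟩
  intro p q
  rcases trichotomous_of r p q with h | h | h
  · exact fun he => ((hspec q).2.2.2 p h).2.2.1 he.symm
  · subst h; exact (hspec p).2.2.1
  · exact ((hspec p).2.2.2 q h).2.1
lemma homog_coloring {u v : L} (h : homog u v) :
    ∃ A B : Set L, A ⊆ Ioo u v ∧ B ⊆ Ioo u v ∧ (∀ x, x ∈ A → x ∉ B) ∧
      ∀ p ∈ Ioo u v, ∀ r ∈ Ioo u v, p < r →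
        (Ioo p r ∩ A).Nonempty ∧ (Ioo p r ∩ B).Nonempty := by
  set κ : Cardinal.{u} := #(Ioo u v : Set L) with hκdef
  have hκ : ℵ₀ ≤ κ := by
    rw [hκdef, ← Cardinal.infinite_iff, Set.infinite_coe_iff]
    exact good_infinite h.1
  set P : Type u := {pr : L × L // pr.1 ∈ Ioo u v ∧ pr.2 ∈ Ioo u v ∧ pr.1 < pr.2} with hPdef
  have hP : #P ≤ κ := by
    have hinj : Function.Injective
        (fun pr : P => ((⟨pr.1.1, pr.2.1⟩, ⟨pr.1.2, pr.2.2.1⟩) :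
          ↥(Ioo u v) × ↥(Ioo u v))) := by
      intro a b hab
      apply Subtype.ext
      have h1 := congrArg (fun z => (z.1 : L)) hab
      have h2 := congrArg (fun z => (z.2 : L)) hab
      simp only at h1 h2
      exact Prod.ext h1 h2
    have := Cardinal.mk_le_of_injective hinj
    rw [Cardinal.mk_prod, Cardinal.lift_id] at this
    rw [← hκdef] at this
    rwa [Cardinal.mul_eq_self hκ] at this
  have hS : ∀ p : P, κ ≤ #(Ioo p.1.1 p.1.2 : Set L) :=
    fun p => (h.2 p.1.1 p.2.1 p.1.2 p.2.2.1 p.2.2.2).ge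
  obtain ⟨f, g, hf, hg, hfg⟩ := exists_transversal (fun p : P => (Ioo p.1.1 p.1.2 : Set L)) κ hκ hP hS
  refine ⟨Set.range f, Set.range g, ?_, ?_, ?_, ?_⟩
  · rintro x ⟨p, rfl⟩
    have := hf p
    exact ⟨p.2.1.1.trans this.1, this.2.trans p.2.2.1.2⟩
  · rintro x ⟨p, rfl⟩
    have := hg p
    exact ⟨p.2.1.1.trans this.1, this.2.trans p.2.2.1.2⟩
  · rintro x ⟨p, rfl⟩ ⟨q, hq⟩
    exact hfg p q hq.symm
  · intro p hp r hr hpr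
    have hmem : ((p, r) : L × L) ∈ {pr : L × L | pr.1 ∈ Ioo u v ∧ pr.2 ∈ Ioo u v ∧ pr.1 < pr.2} :=
      ⟨hp, hr, hpr⟩
    have hpp : ((p, r) : L × L).1 ∈ Ioo u v ∧ ((p, r) : L × L).2 ∈ Ioo u v ∧
        ((p, r) : L × L).1 < ((p, r) : L × L).2 := ⟨hp, hr, hpr⟩
    let pp : P := ⟨(p, r), hpp⟩
    exact ⟨⟨f pp, hf pp, ⟨pp, rfl⟩⟩, ⟨g pp, hg pp, ⟨pp, rfl⟩⟩⟩

lemma good_has_homog {x y : L} (h : good x y) :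
    ∃ p r, p ∈ Ioo x y ∧ r ∈ Ioo x y ∧ p < r ∧ homog p r := by
  set C : Set Cardinal.{u} :=
    {c | ∃ p r : L, p ∈ Ioo x y ∧ r ∈ Ioo x y ∧ p < r ∧ c = #(Ioo p r : Set L)} with hC
  have hCne : C.Nonempty := by
    obtain ⟨z, hz⟩ := h.1
    obtain ⟨z', hz'⟩ := (h.2 z hz).1 x hz.1
    exact ⟨_, z', z, ⟨hz'.1, hz'.2.trans hz.2⟩, hz, hz'.2, rfl⟩
  obtain ⟨c, hc, hcmin⟩ := (Cardinal.lt_wf).has_min C hCne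
  obtain ⟨p, r, hp, hr, hpr, rfl⟩ := hc
  have hsub : Ioo p r ⊆ Ioo x y := fun z hz => ⟨hp.1.trans hz.1, hz.2.trans hr.2⟩
  have hgood : good p r := by
    refine ⟨(h.2 p hp).2 r hpr, fun z hz => h.2 z (hsub hz)⟩
  refine ⟨p, r, hp, hr, hpr, hgood, ?_⟩
  intro p' hp' r' hr' hpr'
  have hle : #(Ioo p' r' : Set L) ≤ #(Ioo p r : Set L) :=
    Cardinal.mk_le_mk_of_subset (fun z hz => ⟨hp'.1.trans hz.1, hz.2.trans hr'.2⟩)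
  have hmem : #(Ioo p' r' : Set L) ∈ C :=
    ⟨p', r', hsub hp', hsub hr', hpr', rfl⟩
  exact le_antisymm hle (not_lt.mp (hcmin _ hmem))
lemma exists_denseA :
    ∃ A : Set L, ∀ x y : L, good x y →
      (∃ a ∈ Ioo x y, a ∈ A) ∧ (∃ b ∈ Ioo x y, b ∉ A) := by
  classical
  set 𝒮 : Set (Set (L × L)) :=
    {F | (∀ e ∈ F, homog (Prod.fst e) (Prod.snd e)) ∧
      ∀ e ∈ F, ∀ e' ∈ F, e ≠ e' →
        Ioo (Prod.fst e) (Prod.snd e) ∩ Ioo (Prod.fst e') (Prod.snd e') = ∅} with h𝒮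
  obtain ⟨M, hM⟩ := zorn_subset 𝒮 (by
    intro c hc hchain
    refine ⟨⋃₀ c, ⟨?_, ?_⟩, fun s hs => subset_sUnion_of_mem hs⟩
    · rintro e ⟨F, hF, heF⟩
      exact (hc hF).1 e heF
    · rintro e ⟨F, hF, heF⟩ e' ⟨F', hF', heF'⟩ hne
      rcases hchain.total hF hF' with hsub | hsub
      · exact (hc hF').2 e (hsub heF) e' heF' hne
      · exact (hc hF).2 e heF e' (hsub heF') hne)
  have hMS : M ∈ 𝒮 := hM.1
  -- choose colorings for each member
  have hcol : ∀ e : M, ∃ AB : Set L × Set L,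
      AB.1 ⊆ Ioo (e : L × L).1 (e : L × L).2 ∧ AB.2 ⊆ Ioo (e : L × L).1 (e : L × L).2 ∧
      (∀ x, x ∈ AB.1 → x ∉ AB.2) ∧
      ∀ p ∈ Ioo (e : L × L).1 (e : L × L).2, ∀ r ∈ Ioo (e : L × L).1 (e : L × L).2, p < r →
        (Ioo p r ∩ AB.1).Nonempty ∧ (Ioo p r ∩ AB.2).Nonempty := by
    intro e
    obtain ⟨A, B, h1, h2, h3, h4⟩ := homog_coloring (hMS.1 (e : L × L) e.2)
    exact ⟨(A, B), h1, h2, h3, h4⟩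
  choose C hC1 hC2 hC3 hC4 using hcol
  set A : Set L := ⋃ e : M, (C e).1 with hA
  refine ⟨A, ?_⟩
  intro x y hgood
  -- find a homogeneous pair inside, then a member of M meeting it
  obtain ⟨p, r, hp, hr, hpr, hhom⟩ := good_has_homog hgood
  have hmeet : ∃ e : M, (Ioo p r ∩ Ioo (e : L × L).1 (e : L × L).2).Nonempty := by
    by_contra hno
    push_neg at hno
    have hnotmem : ((p, r) : L × L) ∉ M := by
      intro hmem
      have h5 := hno ⟨(p, r), hmem⟩
      simp only [Set.inter_self] at h5
      have h2 := hhom.1.1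
      rw [h5] at h2
      exact Set.not_nonempty_empty h2
    have hins : insert ((p, r) : L × L) M ∈ 𝒮 := by
      constructor
      · rintro e (rfl | he)
        · exact hhom
        · exact hMS.1 e he
      · rintro e (rfl | he) e' (rfl | he') hne
        · exact absurd rfl hne
        · exact hno ⟨e', he'⟩
        · rw [Set.inter_comm]; exact hno ⟨e, he⟩
        · exact hMS.2 e he e' he' hne
    have := hM.2 hins (Set.subset_insert _ _)
    exact hnotmem (this (Set.mem_insert _ _))
  obtain ⟨e, w, hw1, hw2⟩ := hmeet
  have hwS : inS w := hgood.2 w ⟨hp.1.trans hw1.1, hw1.2.trans hr.2⟩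
  have ha' : max p (e : L × L).1 < w := max_lt hw1.1 hw2.1
  have hb' : w < min r (e : L × L).2 := lt_min hw1.2 hw2.2
  obtain ⟨w1, hw1'⟩ := hwS.1 _ ha'
  obtain ⟨w2, hw2'⟩ := hwS.2 _ hb'
  have hw1m : w1 ∈ Ioo (e : L × L).1 (e : L × L).2 :=
    ⟨(le_max_right p _).trans_lt hw1'.1, hw1'.2.trans hw2.2⟩
  have hw2m : w2 ∈ Ioo (e : L × L).1 (e : L × L).2 :=
    ⟨hw2.1.trans hw2'.1, hw2'.2.trans_le (min_le_right r _)⟩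
  have hw12 : w1 < w2 := hw1'.2.trans hw2'.1
  have hsub2 : Ioo w1 w2 ⊆ Ioo x y := by
    intro z hz
    refine ⟨hp.1.trans ((le_max_left p _).trans_lt (hw1'.1.trans hz.1)), ?_⟩
    exact ((hz.2.trans hw2'.2).trans_le (min_le_left r _)).trans hr.2
  obtain ⟨⟨a, haI, haA⟩, ⟨b, hbI, hbB⟩⟩ := hC4 e w1 hw1m w2 hw2m hw12
  constructor
  · exact ⟨a, hsub2 haI, Set.mem_iUnion.mpr ⟨e, haA⟩⟩
  · refine ⟨b, hsub2 hbI, ?_⟩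
    intro hbA
    obtain ⟨e2, hbA2⟩ := Set.mem_iUnion.mp hbA
    by_cases hee : e2 = e
    · subst hee
      exact hC3 e2 b hbA2 hbB
    · have hvals : (e2 : L × L) ≠ (e : L × L) := fun h => hee (Subtype.ext h)
      have hdisj := hMS.2 (e2 : L × L) e2.2 (e : L × L) e.2 hvals
      have : b ∈ Ioo (e2 : L × L).1 (e2 : L × L).2 ∩ Ioo (e : L × L).1 (e : L × L).2 :=
        ⟨hC1 e2 hbA2, hC2 e hbB⟩
      rw [hdisj] at this
      exact this
def finRel (u v : L) : Prop := (Icc (u ⊓ v) (u ⊔ v)).Finite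

lemma finRel_refl (x : L) : finRel x x := by
  simp only [finRel, inf_idem, sup_idem, Set.Icc_self]
  exact Set.finite_singleton x

lemma finRel_symm {x y : L} (h : finRel x y) : finRel y x := by
  simpa only [finRel, inf_comm, sup_comm] using h

lemma finRel_trans {x y z : L} (h1 : finRel x y) (h2 : finRel y z) : finRel x z := by
  refine Set.Finite.subset (h1.union h2) ?_
  intro w hw
  rcases le_total w y with hwy | hwy
  · rcases le_total x z with hxz | hxz
    · have hx : x ⊓ z = x := inf_eq_left.mpr hxz
      exact Or.inl ⟨inf_le_left.trans (hx ▸ hw.1), hwy.trans le_sup_right⟩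
    · have hz' : x ⊓ z = z := inf_eq_right.mpr hxz
      exact Or.inr ⟨inf_le_right.trans (hz' ▸ hw.1), hwy.trans le_sup_left⟩
  · rcases le_total x z with hxz | hxz
    · have hz' : x ⊔ z = z := sup_eq_right.mpr hxz
      exact Or.inr ⟨inf_le_left.trans hwy, (hz' ▸ hw.2).trans le_sup_right⟩
    · have hx : x ⊔ z = x := sup_eq_left.mpr hxz
      exact Or.inl ⟨inf_le_right.trans hwy, (hx ▸ hw.2).trans le_sup_left⟩

def finSetoid (L : Type u) [LinearOrder L] : Setoid L :=
  ⟨finRel, fun _ => finRel_refl _, finRel_symm, finRel_trans⟩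

noncomputable def rep (z : L) : L := (Quotient.mk (finSetoid L) z).out

lemma rep_rel (z : L) : finRel (rep z) z :=
  Quotient.exact (Quotient.out_eq (Quotient.mk (finSetoid L) z))

lemma rep_congr {u v : L} (h : finRel u v) : rep u = rep v :=
  congrArg Quotient.out (Quotient.sound h)

noncomputable def parityColor (z : L) : Bool :=
  decide ((Icc (rep z ⊓ z) (rep z ⊔ z)).ncard % 2 = 1)

lemma parity_ne_of_adj {u v : L} (h : u < v) (he : Ioo u v = ∅) :
    parityColor u ≠ parityColor v := by
  have hnoin : ∀ z : L, z ∉ Ioo u v := by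
    intro z hz; rw [he] at hz; exact hz
  have hIccsub : Icc u v ⊆ {u, v} := by
    rintro z ⟨h1, h2⟩
    rcases eq_or_lt_of_le h1 with rfl | h1'
    · exact Or.inl rfl
    rcases eq_or_lt_of_le h2 with rfl | h2'
    · exact Or.inr rfl
    exact absurd ⟨h1', h2'⟩ (hnoin z)
  have huv : finRel u v := by
    unfold finRel
    rw [inf_eq_left.mpr h.le, sup_eq_right.mpr h.le]
    exact Set.Finite.subset ((Set.finite_singleton v).insert u) hIccsub
  have hrepeq : rep u = rep v := rep_congr huv
  have htu : finRel (rep u) u := rep_rel u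
  rcases le_or_gt (rep u) u with h1 | h1
  · -- rep u ≤ u < v
    have hftu : (Icc (rep u) u).Finite := by
      unfold finRel at htu
      rwa [inf_eq_left.mpr h1, sup_eq_right.mpr h1] at htu
    have hIccv : Icc (rep u) v = insert v (Icc (rep u) u) := by
      ext z
      constructor
      · rintro ⟨hz1, hz2⟩
        rcases eq_or_lt_of_le hz2 with rfl | hz2'
        · exact Or.inl rfl
        rcases le_or_gt z u with hzu | hzu
        · exact Or.inr ⟨hz1, hzu⟩
        · exact absurd ⟨hzu, hz2'⟩ (hnoin z)
      · rintro (rfl | ⟨hz1, hz2⟩)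
        · exact ⟨h1.trans h.le, le_rfl⟩
        · exact ⟨hz1, hz2.trans h.le⟩
    have hvnot : v ∉ Icc (rep u) u := fun hc => absurd hc.2 (not_le.mpr h)
    have hcard : (Icc (rep u) v).ncard = (Icc (rep u) u).ncard + 1 := by
      rw [hIccv, Set.ncard_insert_of_notMem hvnot hftu]
    unfold parityColor
    rw [← hrepeq]
    rw [inf_eq_left.mpr h1, sup_eq_right.mpr h1,
      inf_eq_left.mpr (h1.trans h.le), sup_eq_right.mpr (h1.trans h.le), hcard]
    intro hcontra
    rw [decide_eq_decide] at hcontra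
    omega
  · -- u < rep u, and then v ≤ rep u
    have h2 : v ≤ rep u := by
      by_contra hc
      push_neg at hc
      exact absurd ⟨h1, hc⟩ (hnoin (rep u))
    have hftv : (Icc v (rep u)).Finite := by
      have htv := rep_rel v
      rw [← hrepeq] at htv
      unfold finRel at htv
      rwa [inf_eq_right.mpr h2, sup_eq_left.mpr h2] at htv
    have hIccu : Icc u (rep u) = insert u (Icc v (rep u)) := by
      ext z
      constructor
      · rintro ⟨hz1, hz2⟩
        rcases eq_or_lt_of_le hz1 with rfl | hz1'
        · exact Or.inl rfl
        rcases le_or_gt v z with hvz | hvz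
        · exact Or.inr ⟨hvz, hz2⟩
        · exact absurd ⟨hz1', hvz⟩ (hnoin z)
      · rintro (rfl | ⟨hz1, hz2⟩)
        · exact ⟨le_rfl, h1.le⟩
        · exact ⟨h.le.trans hz1, hz2⟩
    have hunot : u ∉ Icc v (rep u) := fun hc => absurd hc.1 (not_le.mpr h)
    have hcard : (Icc u (rep u)).ncard = (Icc v (rep u)).ncard + 1 := by
      rw [hIccu, Set.ncard_insert_of_notMem hunot hftv]
    unfold parityColor
    rw [← hrepeq]
    rw [inf_eq_right.mpr h1.le, sup_eq_left.mpr h1.le,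
      inf_eq_right.mpr h2, sup_eq_left.mpr h2, hcard]
    intro hcontra
    rw [decide_eq_decide] at hcontra
    omega

end DenseBicolor


/-- Every linear order admits a dense bicoloration: a 2-coloring `β` such that
both color classes meet every interval with at least two elements. -/
theorem every_linearOrder_admits_dense_bicoloration (L : Type*) [LinearOrder L] :
    ∃ β : L → Bool,
      ∀ I : Set L, IsInterval I → I.Nontrivial →
        (∃ a ∈ I, β a = false) ∧ (∃ b ∈ I, β b = true) := by
  classical
  open DenseBicolor in
  obtain ⟨A, hA⟩ := DenseBicolor.exists_denseA (L := L)
  refine ⟨fun z => if DenseBicolor.inS z then decide (z ∈ A)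
    else DenseBicolor.parityColor z, ?_⟩
  set β : L → Bool := fun z => if DenseBicolor.inS z then decide (z ∈ A)
    else DenseBicolor.parityColor z with hβ
  suffices key : ∀ I : Set L, IsInterval I → ∀ x ∈ I, ∀ y ∈ I, x < y →
      (∃ a ∈ I, β a = false) ∧ (∃ b ∈ I, β b = true) by
    intro I hI hne
    obtain ⟨x, hx, y, hy, hxy⟩ := hne
    rcases hxy.lt_or_gt with hlt | hlt
    · exact key I hI x hx y hy hlt
    · exact key I hI y hy x hx hlt
  intro I hI x hx y hy hxy
  by_cases hadj : ∃ p q : L, p ∈ Icc x y ∧ q ∈ Icc x y ∧ p < q ∧ Ioo p q = ∅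
  · -- an adjacent pair inside [x,y]; use parity colors
    obtain ⟨p, q, hp, hq, hpq, hemp⟩ := hadj
    have hpI : p ∈ I := hI x hx y hy p hp.1 hp.2
    have hqI : q ∈ I := hI x hx y hy q hq.1 hq.2
    have hpS : ¬ DenseBicolor.inS p := by
      intro hS
      obtain ⟨w, hw⟩ := hS.2 q hpq
      rw [hemp] at hw
      exact hw
    have hqS : ¬ DenseBicolor.inS q := by
      intro hS
      obtain ⟨w, hw⟩ := hS.1 p hpq
      rw [hemp] at hw
      exact hw
    have hβp : β p = DenseBicolor.parityColor p := by rw [hβ]; simp [hpS]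
    have hβq : β q = DenseBicolor.parityColor q := by rw [hβ]; simp [hqS]
    have hne := DenseBicolor.parity_ne_of_adj hpq hemp
    rcases Bool.eq_false_or_eq_true (DenseBicolor.parityColor p) with hbp | hbp
    · refine ⟨⟨q, hqI, ?_⟩, ⟨p, hpI, by rw [hβp, hbp]⟩⟩
      rw [hβq]
      cases hbq : DenseBicolor.parityColor q
      · rfl
      · rw [hbp, hbq] at hne; exact absurd rfl hne
    · refine ⟨⟨p, hpI, by rw [hβp, hbp]⟩, ⟨q, hqI, ?_⟩⟩
      rw [hβq]
      cases hbq : DenseBicolor.parityColor q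
      · rw [hbp, hbq] at hne; exact absurd rfl hne
      · rfl
  · -- no adjacent pair in [x,y]: the interior is good, use A
    push_neg at hadj
    have hstep : ∀ p q : L, p ∈ Icc x y → q ∈ Icc x y → p < q → (Ioo p q).Nonempty := by
      intro p q hp hq hpq
      exact hadj p q hp hq hpq
    have hxyIcc : x ∈ Icc x y := ⟨le_rfl, hxy.le⟩
    have hyIcc : y ∈ Icc x y := ⟨hxy.le, le_rfl⟩
    have hgood : DenseBicolor.good x y := by
      refine ⟨hstep x y hxyIcc hyIcc hxy, ?_⟩
      intro z hz
      constructor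
      · intro w hw
        rcases le_or_gt x w with hxw | hxw
        · exact hstep w z ⟨hxw, (hw.trans hz.2).le⟩ ⟨hz.1.le, hz.2.le⟩ hw
        · obtain ⟨c, hc⟩ := hstep x z hxyIcc ⟨hz.1.le, hz.2.le⟩ hz.1
          exact ⟨c, hxw.trans hc.1, hc.2⟩
      · intro w hw
        rcases le_or_gt w y with hwy | hwy
        · exact hstep z w ⟨hz.1.le, hz.2.le⟩ ⟨(hz.1.trans hw).le, hwy⟩ hw
        · obtain ⟨c, hc⟩ := hstep z y ⟨hz.1.le, hz.2.le⟩ hyIcc hz.2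
          exact ⟨c, hc.1, hc.2.trans hwy⟩
    obtain ⟨⟨a, haI, haA⟩, ⟨b, hbI, hbA⟩⟩ := hA x y hgood
    have haIn : a ∈ I := hI x hx y hy a haI.1.le haI.2.le
    have hbIn : b ∈ I := hI x hx y hy b hbI.1.le hbI.2.le
    have haS : DenseBicolor.inS a := hgood.2 a haI
    have hbS : DenseBicolor.inS b := hgood.2 b hbI
    refine ⟨⟨b, hbIn, ?_⟩, ⟨a, haIn, ?_⟩⟩
    · rw [hβ]; simp [hbS, hbA]
    · rw [hβ]; simp [haS, haA]
end

section
/- For a linearly ordered set L, the family of intervals of L of size at least 2 has the Bernstein property: there exists a set B ⊆ L such that every interval I of L with |I| ≥ 2 meets both B and L \ B. -/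
open Set Cardinal

universe u




section bern
variable {α ι : Type u} (S : ι → Set α) (μ : Cardinal.{u})
  (hμ : ℵ₀ ≤ μ) (hι : #ι ≤ μ) (hS : ∀ i, μ ≤ #(S i)) (e : (#ι).ord.ToType ≃ ι)

noncomputable def bernG (i : (#ι).ord.ToType) (rec : ∀ j, j < i → α × α) : α × α :=
  have hne : ∀ (E : Set α), #E < μ → (S (e i) \ E).Nonempty := fun E hE => by
    rw [Set.nonempty_iff_ne_empty]
    intro h
    rw [diff_eq_empty] at h
    exact absurd ((hS (e i)).trans (mk_le_mk_of_subset h)) (not_le.mpr hE)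
  let E : Set α := (range fun j : Iio i => (rec j j.2).1) ∪
    (range fun j : Iio i => (rec j j.2).2)
  have hIio : #(Iio i) < μ := (mk_Iio_toType_ord_lt i).trans_le hι
  have hE : #E < μ := lt_of_le_of_lt (mk_union_le _ _)
    (add_lt_of_lt hμ (lt_of_le_of_lt (mk_range_le) hIio)
      (lt_of_le_of_lt (mk_range_le) hIio))
  let a : α := (hne E hE).some
  have hE' : #(insert a E : Set α) < μ := lt_of_le_of_lt (mk_insert_le)
    (add_lt_of_lt hμ hE (one_lt_aleph0.trans_le hμ))
  (a, (hne _ hE').some)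

lemma bernG_spec (i : (#ι).ord.ToType) (rec : ∀ j, j < i → α × α) :
    (bernG S μ hμ hι hS e i rec).1 ∈ S (e i) \
      ((range fun j : Iio i => (rec j j.2).1) ∪ (range fun j : Iio i => (rec j j.2).2)) ∧
    (bernG S μ hμ hι hS e i rec).2 ∈ S (e i) \
      (insert (bernG S μ hμ hι hS e i rec).1
        ((range fun j : Iio i => (rec j j.2).1) ∪ (range fun j : Iio i => (rec j j.2).2))) := by
  have hne : ∀ (E : Set α), #E < μ → (S (e i) \ E).Nonempty := fun E hE => by
    rw [Set.nonempty_iff_ne_empty]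
    intro h
    rw [diff_eq_empty] at h
    exact absurd ((hS (e i)).trans (mk_le_mk_of_subset h)) (not_le.mpr hE)
  set E : Set α := (range fun j : Iio i => (rec j j.2).1) ∪
    (range fun j : Iio i => (rec j j.2).2) with hEdef
  have hIio : #(Iio i) < μ := (mk_Iio_toType_ord_lt i).trans_le hι
  have hE : #E < μ := lt_of_le_of_lt (mk_union_le _ _)
    (add_lt_of_lt hμ (lt_of_le_of_lt (mk_range_le) hIio)
      (lt_of_le_of_lt (mk_range_le) hIio))
  have hE' : #(insert ((hne E hE).some) E : Set α) < μ := lt_of_le_of_lt (mk_insert_le)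
    (add_lt_of_lt hμ hE (one_lt_aleph0.trans_le hμ))
  have hG : bernG S μ hμ hι hS e i rec = ((hne E hE).some, (hne _ hE').some) := rfl
  rw [hG]
  exact ⟨(hne E hE).some_mem, (hne _ hE').some_mem⟩

noncomputable def bernFix : (#ι).ord.ToType → α × α :=
  WellFounded.fix wellFounded_lt (bernG S μ hμ hι hS e)

lemma bernFix_spec (i : (#ι).ord.ToType) :
    (bernFix S μ hμ hι hS e i).1 ∈ S (e i) ∧ (bernFix S μ hμ hι hS e i).2 ∈ S (e i) ∧
    (bernFix S μ hμ hι hS e i).1 ≠ (bernFix S μ hμ hι hS e i).2 ∧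
    ∀ j, j < i →
      (bernFix S μ hμ hι hS e i).1 ≠ (bernFix S μ hμ hι hS e j).1 ∧
      (bernFix S μ hμ hι hS e i).1 ≠ (bernFix S μ hμ hι hS e j).2 ∧
      (bernFix S μ hμ hι hS e i).2 ≠ (bernFix S μ hμ hι hS e j).1 ∧
      (bernFix S μ hμ hι hS e i).2 ≠ (bernFix S μ hμ hι hS e j).2 := by
  have hfix : bernFix S μ hμ hι hS e i
      = bernG S μ hμ hι hS e i (fun j _ => bernFix S μ hμ hι hS e j) :=
    WellFounded.fix_eq _ _ _
  have hspec := bernG_spec S μ hμ hι hS e i (fun j _ => bernFix S μ hμ hι hS e j)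
  rw [← hfix] at hspec
  obtain ⟨⟨h1S, h1E⟩, h2S, h2E⟩ := hspec
  rw [mem_insert_iff] at h2E
  push_neg at h2E
  obtain ⟨h2a, h2E⟩ := h2E
  refine ⟨h1S, h2S, fun h => h2a h.symm, fun j hj => ?_⟩
  have m1 : (bernFix S μ hμ hι hS e j).1 ∈
      (range fun j' : Iio i => (bernFix S μ hμ hι hS e j'.1).1) ∪
      (range fun j' : Iio i => (bernFix S μ hμ hι hS e j'.1).2) :=
    Or.inl ⟨⟨j, hj⟩, rfl⟩
  have m2 : (bernFix S μ hμ hι hS e j).2 ∈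
      (range fun j' : Iio i => (bernFix S μ hμ hι hS e j'.1).1) ∪
      (range fun j' : Iio i => (bernFix S μ hμ hι hS e j'.1).2) :=
    Or.inr ⟨⟨j, hj⟩, rfl⟩
  exact ⟨fun h => h1E (h ▸ m1), fun h => h1E (h ▸ m2),
    fun h => h2E (h ▸ m1), fun h => h2E (h ▸ m2)⟩

include hμ hι hS e in
lemma bernsteinSelect : ∃ B : Set α, ∀ i, (S i ∩ B).Nonempty ∧ (S i \ B).Nonempty := by
  refine ⟨range fun t => (bernFix S μ hμ hι hS e t).1, fun i => ?_⟩
  set F := bernFix S μ hμ hι hS e with hF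
  set t := e.symm i with ht
  have hei : e t = i := e.apply_symm_apply i
  have hsp := bernFix_spec S μ hμ hι hS e t
  constructor
  · exact ⟨(F t).1, hei ▸ hsp.1, ⟨t, rfl⟩⟩
  · refine ⟨(F t).2, ⟨hei ▸ hsp.2.1, ?_⟩⟩
    rintro ⟨u, hu⟩
    rcases lt_trichotomy u t with h | h | h
    · exact ((bernFix_spec S μ hμ hι hS e t).2.2.2 u h).2.2.1 hu.symm
    · exact (bernFix_spec S μ hμ hι hS e t).2.2.1 (h ▸ hu)
    · exact ((bernFix_spec S μ hμ hι hS e u).2.2.2 t h).2.1 hu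
end bern

lemma bernstein' {α ι : Type u} (S : ι → Set α) (μ : Cardinal.{u})
    (hμ : ℵ₀ ≤ μ) (hι : #ι ≤ μ) (hS : ∀ i, μ ≤ #(S i)) :
    ∃ B : Set α, ∀ i, (S i ∩ B).Nonempty ∧ (S i \ B).Nonempty :=
  bernsteinSelect S μ hμ hι hS (Classical.choice (Cardinal.eq.mp (mk_ord_toType #ι)))

variable {L : Type u} [LinearOrder L]



/-- dense pair: every subinterval is nonempty -/
def densePair (x y : L) : Prop :=
  x < y ∧ ∀ z w, x ≤ z → z < w → w ≤ y → (Set.Ioo z w).Nonempty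

lemma densePair_sub {x y s t : L} (h : densePair x y) (hs : x ≤ s) (hst : s < t)
    (ht : t ≤ y) : densePair s t :=
  ⟨hst, fun z w hz hzw hw => h.2 z w (hs.trans hz) hzw (hw.trans ht)⟩

lemma densePair_infinite {x y : L} (h : densePair x y) : (Set.Ioo x y).Infinite := by
  by_contra hinf
  rw [Set.not_infinite] at hinf
  have hfin := hinf
  obtain ⟨m, hm, hmin⟩ := Set.exists_min_image _ id hfin (h.2 x y le_rfl h.1 le_rfl)
  obtain ⟨v, hv⟩ := h.2 x m le_rfl hm.1 hm.2.le
  exact absurd (hmin v ⟨hv.1, hv.2.trans hm.2⟩) (not_le.mpr hv.2)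

lemma densePair_no_succ {x y z : L} (h : densePair x y) (hz : z ∈ Set.Ioo x y) :
    ∀ w, z < w → (Set.Ioo z w).Nonempty := by
  intro w hw
  rcases le_or_gt w y with hwy | hwy
  · exact h.2 z w hz.1.le hw hwy
  · obtain ⟨v, hv⟩ := h.2 z y hz.1.le hz.2 le_rfl
    exact ⟨v, hv.1, hv.2.trans hwy⟩

lemma densePair_no_pred {x y z : L} (h : densePair x y) (hz : z ∈ Set.Ioo x y) :
    ∀ w, w < z → (Set.Ioo w z).Nonempty := by
  intro w hw
  rcases le_or_gt x w with hxw | hxw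
  · exact h.2 w z hxw hw hz.2.le
  · obtain ⟨v, hv⟩ := h.2 x z le_rfl hz.1 hz.2.le
    exact ⟨v, hxw.trans hv.1, hv.2⟩

/-- finite-distance equivalence -/
def fsetoid (L : Type u) [LinearOrder L] : Setoid L :=
  ⟨fun x y => (Set.uIcc x y).Finite,
   fun x => by rw [Set.uIcc_self]; exact Set.finite_singleton x,
   fun {x y} h => by rwa [Set.uIcc_comm],
   fun {x y z} h1 h2 => (h1.union h2).subset Set.uIcc_subset_uIcc_union_uIcc⟩

noncomputable def rep (x : L) : L := (Quotient.mk (fsetoid L) x).out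

lemma rep_rel (x : L) : (Set.uIcc (rep x) x).Finite := Quotient.mk_out (s := fsetoid L) x

lemma rep_eq {x y : L} (h : (Set.uIcc x y).Finite) : rep x = rep y := by
  unfold rep
  rw [Quotient.sound (s := fsetoid L) h]

/-- parity of distance to the class representative -/
def par (x : L) : Prop := Even ((Set.uIcc (rep x) x).ncard)

lemma jump_flip {z w : L} (hzw : z < w) (hIoo : Set.Ioo z w = ∅) : par z ↔ ¬ par w := by
  have hno : ∀ v, z < v → v < w → False := fun v h1 h2 => by
    have hv : v ∈ Set.Ioo z w := ⟨h1, h2⟩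
    rw [hIoo] at hv
    exact hv
  have hIcc : Set.Icc z w = {z, w} := by
    ext v
    constructor
    · rintro ⟨h1, h2⟩
      rcases eq_or_lt_of_le h1 with h | h
      · exact Or.inl h.symm
      rcases eq_or_lt_of_le h2 with h' | h'
      · exact Or.inr h'
      · exact (hno v h h').elim
    · rintro (rfl | rfl)
      · exact ⟨le_rfl, hzw.le⟩
      · exact ⟨hzw.le, le_rfl⟩
  have hfin : (Set.uIcc z w).Finite := by
    rw [Set.uIcc_of_le hzw.le, hIcc]
    exact (Set.finite_singleton w).insert z
  have hrep : rep z = rep w := rep_eq hfin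
  set c := rep z with hc
  have hcz : (Set.uIcc c z).Finite := rep_rel z
  unfold par
  rw [← hrep, ← hc]
  rcases le_or_gt c z with hle | hlt
  · have hins : Set.Icc c w = insert w (Set.Icc c z) := by
      ext v
      simp only [Set.mem_Icc, Set.mem_insert_iff]
      constructor
      · rintro ⟨h1, h2⟩
        rcases eq_or_lt_of_le h2 with h | h
        · exact Or.inl h
        · refine Or.inr ⟨h1, ?_⟩
          by_contra hzv
          exact hno v (not_le.mp hzv) h
      · rintro (rfl | ⟨h1, h2⟩)
        · exact ⟨hle.trans hzw.le, le_rfl⟩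
        · exact ⟨h1, h2.trans hzw.le⟩
    rw [Set.uIcc_of_le hle, Set.uIcc_of_le (hle.trans hzw.le), hins,
      Set.ncard_insert_of_notMem (fun h => absurd h.2 (not_le.mpr hzw))
        (by rwa [Set.uIcc_of_le hle] at hcz)]
    simp [Nat.even_add_one]
  · have hwc : w ≤ c := by
      by_contra hcw
      exact hno c hlt (not_le.mp hcw)
    have hins : Set.Icc z c = insert z (Set.Icc w c) := by
      ext v
      simp only [Set.mem_Icc, Set.mem_insert_iff]
      constructor
      · rintro ⟨h1, h2⟩
        rcases eq_or_lt_of_le h1 with h | h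
        · exact Or.inl h.symm
        · refine Or.inr ⟨?_, h2⟩
          by_contra hvw
          exact hno v h (not_le.mp hvw)
      · rintro (rfl | ⟨h1, h2⟩)
        · exact ⟨le_rfl, hlt.le⟩
        · exact ⟨(hzw.trans_le h1).le, h2⟩
    have hfinwc : (Set.Icc w c).Finite := by
      refine ((by rwa [Set.uIcc_of_ge hlt.le] at hcz : (Set.Icc z c).Finite)).subset ?_
      exact Set.Icc_subset_Icc_left hzw.le
    rw [Set.uIcc_of_ge hlt.le, Set.uIcc_of_ge hwc, hins,
      Set.ncard_insert_of_notMem (fun h => absurd h.1 (not_le.mpr hzw)) hfinwc]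
    simp [Nat.even_add_one]

lemma not_par_of_dense {z : L} (hsucc : ∀ w, z < w → (Set.Ioo z w).Nonempty)
    (hpred : ∀ w, w < z → (Set.Ioo w z).Nonempty) : ¬ par z := by
  have hrz : rep z = z := by
    rcases lt_trichotomy (rep z) z with h | h | h
    · exfalso
      have hfin : (Set.Ico (rep z) z).Finite :=
        (rep_rel z).subset (by rw [Set.uIcc_of_le h.le]; exact Set.Ico_subset_Icc_self)
      obtain ⟨m, hm, hmax⟩ := Set.exists_max_image _ id hfin ⟨rep z, le_rfl, h⟩
      obtain ⟨v, hv⟩ := hpred m hm.2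
      exact absurd (hmax v ⟨hm.1.trans hv.1.le, hv.2⟩) (not_le.mpr hv.1)
    · exact h
    · exfalso
      have hfin : (Set.Ioc z (rep z)).Finite :=
        (rep_rel z).subset (by rw [Set.uIcc_of_ge h.le]; exact Set.Ioc_subset_Icc_self)
      obtain ⟨m, hm, hmin⟩ := Set.exists_min_image _ id hfin ⟨rep z, h, le_rfl⟩
      obtain ⟨v, hv⟩ := hsucc m hm.1
      exact absurd (hmin v ⟨hv.1, hv.2.le.trans hm.2⟩) (not_le.mpr hv.2)
  unfold par
  rw [hrz, Set.uIcc_self, Set.ncard_singleton]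
  exact Nat.not_even_one

/-- homogeneous dense pair -/
def homogPair (x y : L) : Prop :=
  densePair x y ∧ ∀ z w, x ≤ z → z < w → w ≤ y → #(Set.Ioo z w) = #(Set.Ioo x y)

lemma exists_homog {x y : L} (h : densePair x y) :
    ∃ s t, x ≤ s ∧ s < t ∧ t ≤ y ∧ homogPair s t := by
  set C : Set Cardinal.{u} := {c | ∃ s t, x ≤ s ∧ s < t ∧ t ≤ y ∧ c = #(Set.Ioo s t)}
  have hCne : C.Nonempty := ⟨#(Set.Ioo x y), x, y, le_rfl, h.1, le_rfl, rfl⟩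
  obtain ⟨μ, hμC, hμmin⟩ := Cardinal.lt_wf.has_min C hCne
  obtain ⟨s, t, hxs, hst, hty, rfl⟩ := hμC
  refine ⟨s, t, hxs, hst, hty, densePair_sub h hxs hst hty, fun z w hz hzw hw => ?_⟩
  refine le_antisymm (mk_le_mk_of_subset (Set.Ioo_subset_Ioo hz hw)) ?_
  by_contra hlt
  exact hμmin #(Set.Ioo z w) ⟨z, w, hxs.trans hz, hzw, hw.trans hty, rfl⟩ (not_le.mp hlt)

lemma exists_Bp {s t : L} (h : homogPair s t) :
    ∃ Bp, Bp ⊆ Set.Ioo s t ∧ ∀ u v, s ≤ u → u < v → v ≤ t →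
      (Set.Ioo u v ∩ Bp).Nonempty ∧ (Set.Ioo u v \ Bp).Nonempty := by
  set μ := #(Set.Ioo s t) with hμdef
  haveI : Infinite (Set.Ioo s t) := Set.infinite_coe_iff.mpr (densePair_infinite h.1)
  have hμ : ℵ₀ ≤ μ := Cardinal.aleph0_le_mk _
  set ι := {q : L × L // s ≤ q.1 ∧ q.1 < q.2 ∧ q.2 ≤ t} with hιdef
  have hIcc : #(Set.Icc s t) ≤ μ := by
    have hsub : Set.Icc s t ⊆ insert s (insert t (Set.Ioo s t)) := by
      intro v ⟨h1, h2⟩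
      rcases eq_or_lt_of_le h1 with h' | h'
      · exact Or.inl h'.symm
      rcases eq_or_lt_of_le h2 with h'' | h''
      · exact Or.inr (Or.inl h'')
      · exact Or.inr (Or.inr ⟨h', h''⟩)
    calc #(Set.Icc s t) ≤ #(insert s (insert t (Set.Ioo s t)) : Set L) :=
          mk_le_mk_of_subset hsub
      _ ≤ #(insert t (Set.Ioo s t) : Set L) + 1 := mk_insert_le
      _ ≤ (μ + 1) + 1 := by gcongr; exact mk_insert_le
      _ = μ := by
          rw [add_assoc, Cardinal.add_eq_left hμ]
          exact le_trans (le_of_lt (by exact_mod_cast Cardinal.nat_lt_aleph0 2)) hμ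
  have hι : #ι ≤ μ := by
    have hemb : ∃ f : ι → Set.Icc s t × Set.Icc s t, Function.Injective f := by
      refine ⟨fun q => (⟨q.1.1, q.2.1, q.2.2.1.le.trans q.2.2.2⟩,
        ⟨q.1.2, q.2.1.trans q.2.2.1.le, q.2.2.2⟩), fun a b hab => ?_⟩
      obtain ⟨h1, h2⟩ := Prod.mk.injEq _ _ _ _ ▸ hab
      exact Subtype.ext (Prod.ext (congrArg Subtype.val h1) (congrArg Subtype.val h2))
    obtain ⟨f, hf⟩ := hemb
    calc #ι ≤ #(Set.Icc s t × Set.Icc s t) := mk_le_of_injective hf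
      _ = #(Set.Icc s t) * #(Set.Icc s t) := by rw [Cardinal.mk_prod]; simp
      _ ≤ μ * μ := by gcongr
      _ = μ := mul_eq_self hμ
  obtain ⟨B, hB⟩ := bernstein' (fun q : ι => Set.Ioo q.1.1 q.1.2) μ hμ hι
    (fun q => le_of_eq (h.2 q.1.1 q.1.2 q.2.1 q.2.2.1 q.2.2.2).symm)
  refine ⟨B ∩ Set.Ioo s t, Set.inter_subset_right, fun u v hu huv hv => ?_⟩
  obtain ⟨⟨w1, hw1⟩, ⟨w2, hw2⟩⟩ := hB ⟨(u, v), hu, huv, hv⟩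
  have hsubuv : Set.Ioo u v ⊆ Set.Ioo s t := Set.Ioo_subset_Ioo hu hv
  exact ⟨⟨w1, hw1.1, hw1.2, hsubuv hw1.1⟩,
    ⟨w2, hw2.1, fun hc => hw2.2 hc.1⟩⟩

/-- The family of intervals of size at least 2 of a linear order has the
Bernstein property: some `B ⊆ L` meets every such interval and so does its
complement. -/
theorem intervals_bernstein_property (L : Type*) [LinearOrder L] :
    ∃ B : Set L,
      ∀ I : Set L, IsInterval I → I.Nontrivial →
        (I ∩ B).Nonempty ∧ (I \ B).Nonempty := by
  classical
  -- Zorn: maximal family of pairwise disjoint homogeneous dense intervals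
  set Fam : Set (Set (L × L)) := {A | (∀ p ∈ A, homogPair p.1 p.2) ∧
    A.Pairwise fun p q => Disjoint (Set.Ioo p.1 p.2) (Set.Ioo q.1 q.2)} with hFam
  obtain ⟨M, hM⟩ := zorn_subset Fam (by
    intro c hc hchain
    refine ⟨⋃₀ c, ⟨?_, ?_⟩, fun A hA => Set.subset_sUnion_of_mem hA⟩
    · rintro p ⟨A, hA, hpA⟩
      exact (hc hA).1 p hpA
    · rintro p ⟨A, hA, hpA⟩ q ⟨A', hA', hqA'⟩ hpq
      rcases hchain.total hA hA' with hss | hss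
      · exact (hc hA').2 (hss hpA) hqA' hpq
      · exact (hc hA).2 hpA (hss hqA') hpq)
  have hMhom : ∀ p ∈ M, homogPair p.1 p.2 := hM.1.1
  have key : ∀ p : L × L, p ∈ M → ∃ Bp, Bp ⊆ Set.Ioo p.1 p.2 ∧
      ∀ u v, p.1 ≤ u → u < v → v ≤ p.2 →
      (Set.Ioo u v ∩ Bp).Nonempty ∧ (Set.Ioo u v \ Bp).Nonempty :=
    fun p hp => exists_Bp (hMhom p hp)
  choose f hf1 hf2 using key
  set B2 : Set L := ⋃ p : M, f p.1 p.2 with hB2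
  refine ⟨{z | par z} ∪ B2, fun I hInt hNont => ?_⟩
  obtain ⟨a, ha, b, hb, hab⟩ := hNont
  set x := min a b with hxdef
  set y := max a b with hydef
  have hxy : x < y := min_lt_max.mpr hab
  have hxI : x ∈ I := by rcases min_choice a b with h | h <;> rw [hxdef, h] <;> assumption
  have hyI : y ∈ I := by rcases max_choice a b with h | h <;> rw [hydef, h] <;> assumption
  have hIcc : ∀ v, x ≤ v → v ≤ y → v ∈ I := fun v h1 h2 => hInt x hxI y hyI v h1 h2
  by_cases hd : ∀ z w, x ≤ z → z < w → w ≤ y → (Set.Ioo z w).Nonempty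
  · -- dense case
    have hdp : densePair x y := ⟨hxy, hd⟩
    have hmeet : ∃ p ∈ M, (Set.Ioo x y ∩ Set.Ioo p.1 p.2).Nonempty := by
      by_contra hcon
      push_neg at hcon
      obtain ⟨s, t, hxs, hst, hty, hh⟩ := exists_homog hdp
      have hsub : Set.Ioo s t ⊆ Set.Ioo x y := Set.Ioo_subset_Ioo hxs hty
      have hstne : (Set.Ioo s t).Nonempty := hh.1.2 s t le_rfl hst le_rfl
      have hnew : insert (s, t) M ∈ Fam := by
        constructor
        · rintro p (rfl | hp)
          · exact hh
          · exact hMhom p hp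
        · refine (haveI : Std.Symm (fun p q : L × L => Disjoint (Set.Ioo p.1 p.2) (Set.Ioo q.1 q.2)) := ⟨fun _ _ h => Disjoint.symm h⟩; hM.1.2.insert_of_symm ?_)
          intro q hq _
          refine Set.disjoint_left.mpr fun w hw hw' => ?_
          exact Set.eq_empty_iff_forall_notMem.mp (hcon q hq) w ⟨hsub hw, hw'⟩
      have hins : (s, t) ∈ M := hM.2 hnew (Set.subset_insert _ _) (Set.mem_insert _ _)
      exact Set.eq_empty_iff_forall_notMem.mp (hcon (s, t) hins) hstne.some
        ⟨hsub hstne.some_mem, hstne.some_mem⟩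
    obtain ⟨p, hpM, z, hz1, hz2⟩ := hmeet
    set u := max x p.1 with hu
    set v := min y p.2 with hv
    have huz : u < z := max_lt hz1.1 hz2.1
    have hzv : z < v := lt_min hz1.2 hz2.2
    have hsubxy : Set.Ioo u v ⊆ Set.Ioo x y :=
      Set.Ioo_subset_Ioo (le_max_left _ _) (min_le_left _ _)
    have hsubp : Set.Ioo u v ⊆ Set.Ioo p.1 p.2 :=
      Set.Ioo_subset_Ioo (le_max_right _ _) (min_le_right _ _)
    obtain ⟨⟨w1, hw1⟩, ⟨w2, hw2⟩⟩ := hf2 p hpM u v (le_max_right _ _)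
      (huz.trans hzv) (min_le_right _ _)
    constructor
    · refine ⟨w1, hIcc w1 (hsubxy hw1.1).1.le (hsubxy hw1.1).2.le, Or.inr ?_⟩
      exact Set.mem_iUnion.mpr ⟨⟨p, hpM⟩, hw1.2⟩
    · refine ⟨w2, hIcc w2 (hsubxy hw2.1).1.le (hsubxy hw2.1).2.le, ?_⟩
      rintro (hpar | hB2mem)
      · exact not_par_of_dense (densePair_no_succ hdp (hsubxy hw2.1))
          (densePair_no_pred hdp (hsubxy hw2.1)) hpar
      · obtain ⟨⟨q, hqM⟩, hwq⟩ := Set.mem_iUnion.mp hB2mem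
        by_cases hqp : q = p
        · subst hqp
          exact hw2.2 hwq
        · have hdisj : Disjoint (Set.Ioo q.1 q.2) (Set.Ioo p.1 p.2) := hM.1.2 hqM hpM hqp
          exact (Set.disjoint_left.mp hdisj (hf1 q hqM hwq) (hsubp hw2.1)).elim
  · -- jump case
    push_neg at hd
    obtain ⟨z, w, hxz, hzw, hwy, hne⟩ := hd
    have hflip := jump_flip hzw hne
    have hzI : z ∈ I := hIcc z hxz (hzw.le.trans hwy)
    have hwI : w ∈ I := hIcc w (hxz.trans hzw.le) hwy
    have hnotin : ∀ v', ((∃ w', v' < w' ∧ Set.Ioo v' w' = ∅) ∨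
        (∃ w', w' < v' ∧ Set.Ioo w' v' = ∅)) → v' ∉ B2 := by
      rintro v' hv' hv'B2
      obtain ⟨⟨q, hqM⟩, hwq⟩ := Set.mem_iUnion.mp hv'B2
      have hvIoo : v' ∈ Set.Ioo q.1 q.2 := hf1 q hqM hwq
      rcases hv' with ⟨w', hlt, hemp⟩ | ⟨w', hlt, hemp⟩
      · obtain ⟨r, hr⟩ := densePair_no_succ (hMhom q hqM).1 hvIoo w' hlt
        rw [hemp] at hr
        exact hr
      · obtain ⟨r, hr⟩ := densePair_no_pred (hMhom q hqM).1 hvIoo w' hlt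
        rw [hemp] at hr
        exact hr
    by_cases hpz : par z
    · refine ⟨⟨z, hzI, Or.inl hpz⟩, ⟨w, hwI, ?_⟩⟩
      rintro (hpar | hB2mem)
      · exact hflip.mp hpz hpar
      · exact hnotin w (Or.inr ⟨z, hzw, hne⟩) hB2mem
    · have hpw : par w := by
        by_contra hpw
        exact hpz (hflip.mpr hpw)
      refine ⟨⟨w, hwI, Or.inl hpw⟩, ⟨z, hzI, ?_⟩⟩
      rintro (hpar | hB2mem)
      · exact hpz hpar
      · exact hnotin z (Or.inl ⟨w, hzw, hne⟩) hB2mem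
end

section
/- Let σ be a 2-structure on V with a distinguished family P(σ) of prime clans (those clans C such that every clan D with C ∩ D ≠ ∅ satisfies C ⊆ D or D ⊆ C). Then for every nonempty W ⊆ V, the intersection of all prime clans of σ containing W is itself a prime clan of σ. -/
/-- A 2-structure on `V`: an equivalence relation on ordered pairs
(only its restriction to pairs of distinct elements is meaningful). -/
structure TwoStructure (V : Type*) where
  rel : V × V → V × V → Prop
  equiv : Equivalence rel

namespace TwoStructure

variable {V : Type*}

/-- `C` is a clan of `σ`. -/
def IsClan (σ : TwoStructure V) (C : Set V) : Prop :=
  ∀ c ∈ C, ∀ d ∈ C, ∀ v ∉ C, σ.rel (c, v) (d, v) ∧ σ.rel (v, c) (v, d)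

/-- The equivalence class of the pair `p`. -/
def classOf (σ : TwoStructure V) (p : V × V) : Set (V × V) :=
  {q | q.1 ≠ q.2 ∧ σ.rel p q}

/-- `e` is an equivalence class of `σ`. -/
def IsClass (σ : TwoStructure V) (e : Set (V × V)) : Prop :=
  ∃ p : V × V, p.1 ≠ p.2 ∧ e = σ.classOf p

/-- The dual 2-structure `σ*`. -/
def dual (σ : TwoStructure V) : TwoStructure V where
  rel p q := σ.rel (p.2, p.1) (q.2, q.1)
  equiv := ⟨fun _ => σ.equiv.refl _, fun h => σ.equiv.symm h,
    fun h h' => σ.equiv.trans h h'⟩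

/-- The conjunction `σ ∧ τ` of two 2-structures on the same vertex set. -/
def conj (σ τ : TwoStructure V) : TwoStructure V where
  rel p q := σ.rel p q ∧ τ.rel p q
  equiv := ⟨fun p => ⟨σ.equiv.refl p, τ.equiv.refl p⟩,
    fun h => ⟨σ.equiv.symm h.1, τ.equiv.symm h.2⟩,
    fun h h' => ⟨σ.equiv.trans h.1 h'.1, τ.equiv.trans h.2 h'.2⟩⟩

/-- `σ` is reversible: `σ = σ*` on pairs of distinct elements. -/
def Reversible (σ : TwoStructure V) : Prop :=
  ∀ p q : V × V, p.1 ≠ p.2 → q.1 ≠ q.2 →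
    (σ.rel p q ↔ σ.rel (p.2, p.1) (q.2, q.1))

/-- `σ` is primitive: at least 3 vertices and only trivial clans. -/
def Primitive (σ : TwoStructure V) : Prop :=
  (∃ a b c : V, a ≠ b ∧ a ≠ c ∧ b ≠ c) ∧
  ∀ C : Set V, σ.IsClan C → C = ∅ ∨ C = Set.univ ∨ ∃ v, C = {v}

/-- A clan `C` is prime if every clan meeting it is comparable with it. -/
def IsPrime (σ : TwoStructure V) (C : Set V) : Prop :=
  σ.IsClan C ∧ ∀ D : Set V, σ.IsClan D → (C ∩ D).Nonempty → C ⊆ D ∨ D ⊆ C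

/-- `C` is a clan of the induced substructure `σ[W]`. -/
def IsClanIn (σ : TwoStructure V) (W C : Set V) : Prop :=
  C ⊆ W ∧ ∀ c ∈ C, ∀ d ∈ C, ∀ v ∈ W, v ∉ C →
    σ.rel (c, v) (d, v) ∧ σ.rel (v, c) (v, d)

end TwoStructure

/-- The reverse `e*` of a set of ordered pairs. -/
def setStar {V : Type*} (e : Set (V × V)) : Set (V × V) := {q | (q.2, q.1) ∈ e}

/-- For every nonempty `W ⊆ V`, the intersection of all prime clans
containing `W` is a prime clan. -/
theorem sInter_prime_clans_prime {V : Type*} (σ : TwoStructure V)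
    (W : Set V) (hW : W.Nonempty) :
    σ.IsPrime (⋂₀ {C : Set V | σ.IsPrime C ∧ W ⊆ C}) := by
  set S : Set (Set V) := {C : Set V | σ.IsPrime C ∧ W ⊆ C} with hS
  have hclan : σ.IsClan (⋂₀ S) := by
    intro c hc d hd v hv
    simp only [Set.mem_sInter, not_forall] at hv
    obtain ⟨C, hCS, hvC⟩ := hv
    exact hCS.1.1 c (hc C hCS) d (hd C hCS) v hvC
  refine ⟨hclan, fun D hD hne => ?_⟩
  by_cases h : ∃ C ∈ S, C ⊆ D
  · obtain ⟨C, hCS, hCD⟩ := h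
    exact Or.inl fun x hx => hCD (hx C hCS)
  · push_neg at h
    refine Or.inr fun x hx => Set.mem_sInter.2 fun C hCS => ?_
    rcases hCS.1.2 D hD (hne.mono (Set.inter_subset_inter_left D
      (Set.sInter_subset_of_mem hCS))) with h1 | h2
    · exact absurd h1 (h C hCS)
    · exact h2 hx
end
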